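/- Let N ≥ 1 be an integer, let a < b be real numbers, and let f_1, …, f_N and g_1, …, g_N be continuous real-valued functions on [a,b]. Then ∫_{[a,b]^N} det((f_i(x_j))_{1≤i,j≤N}) · det((g_i(x_j))_{1≤i,j≤N}) dx_1 ⋯ dx_N = N! · det((∫_a^b f_i(x) g_j(x) dx)_{1≤i,j≤N}). -/

import Mathlib

open MeasureTheory
open scoped Matrix

/-- **de Bruijn / Andréief identity.** -/
theorem stmt_0 (N : ℕ) (hN : 1 ≤ N) (a b : ℝ) (hab : a < b)
    (f g : Fin N → ℝ → ℝ)
    (hf : ∀ i, ContinuousOn (f i) (Set.Icc a b))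
    (hg : ∀ i, ContinuousOn (g i) (Set.Icc a b)) :
    (∫ x in (Set.univ.pi fun _ : Fin N => Set.Icc a b),
        Matrix.det (Matrix.of fun i j : Fin N => f i (x j)) *
          Matrix.det (Matrix.of fun i j : Fin N => g i (x j)))
      = (N.factorial : ℝ) *
          Matrix.det (Matrix.of fun i j : Fin N => ∫ t in Set.Icc a b, f i t * g j t) := by
  classical
  set S : Set (Fin N → ℝ) := Set.univ.pi fun _ : Fin N => Set.Icc a b with hSdef
  have hS : MeasurableSet S := MeasurableSet.univ_pi fun _ => measurableSet_Icc
  set C : Matrix (Fin N) (Fin N) ℝ :=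
    Matrix.of fun i j : Fin N => ∫ t in Set.Icc a b, f i t * g j t with hC
  -- pointwise expansion of the integrand
  have hdet : ∀ x : Fin N → ℝ,
      Matrix.det (Matrix.of fun i j : Fin N => f i (x j)) *
        Matrix.det (Matrix.of fun i j : Fin N => g i (x j))
      = ∑ σ : Equiv.Perm (Fin N), ∑ τ : Equiv.Perm (Fin N),
          ((Equiv.Perm.sign σ : ℤ) : ℝ) * ((Equiv.Perm.sign τ : ℤ) : ℝ) *
            ∏ i, f (σ i) (x i) * g (τ i) (x i) := by
    intro x
    rw [Matrix.det_apply', Matrix.det_apply', Finset.sum_mul_sum]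
    refine Finset.sum_congr rfl fun σ _ => Finset.sum_congr rfl fun τ _ => ?_
    simp only [Matrix.of_apply, Finset.prod_mul_distrib]
    ring
  -- indicator identity
  have hind : ∀ (σ τ : Equiv.Perm (Fin N)) (x : Fin N → ℝ),
      S.indicator (fun x : Fin N → ℝ => ∏ i, f (σ i) (x i) * g (τ i) (x i)) x
        = ∏ i, (Set.Icc a b).indicator (fun t => f (σ i) t * g (τ i) t) (x i) := by
    intro σ τ x
    by_cases hx : x ∈ S
    · rw [Set.indicator_of_mem hx]
      refine Finset.prod_congr rfl fun i _ => ?_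
      rw [Set.indicator_of_mem (hx i (Set.mem_univ i))]
    · rw [Set.indicator_of_notMem hx]
      have hx' : ¬ ∀ i, x i ∈ Set.Icc a b := fun h => hx fun i _ => h i
      obtain ⟨i, hi⟩ := not_forall.mp hx'
      exact (Finset.prod_eq_zero (Finset.mem_univ i)
        (by rw [Set.indicator_of_notMem hi])).symm
  -- integrability of each term
  have hintg : ∀ (σ τ : Equiv.Perm (Fin N)),
      Integrable (fun x : Fin N → ℝ => ∏ i, f (σ i) (x i) * g (τ i) (x i))
        (volume.restrict S) := by
    intro σ τ
    have h' : IntegrableOn (fun x : Fin N → ℝ => ∏ i, f (σ i) (x i) * g (τ i) (x i)) S := by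
      rw [← integrable_indicator_iff hS]
      have heq : (S.indicator fun x : Fin N → ℝ => ∏ i, f (σ i) (x i) * g (τ i) (x i))
          = fun x : Fin N → ℝ =>
            ∏ i, (Set.Icc a b).indicator (fun t => f (σ i) t * g (τ i) t) (x i) :=
        funext (hind σ τ)
      rw [heq]
      refine Integrable.fintype_prod (𝕜 := ℝ) fun i => ?_
      rw [integrable_indicator_iff measurableSet_Icc]
      exact (((hf (σ i)).mul (hg (τ i))).integrableOn_compact isCompact_Icc)
    exact h'
  -- integral of each product term
  have hprod : ∀ (σ τ : Equiv.Perm (Fin N)),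
      (∫ x in S, ∏ i, f (σ i) (x i) * g (τ i) (x i))
        = ∏ i, C (σ i) (τ i) := by
    intro σ τ
    rw [← integral_indicator hS]
    have : (S.indicator fun x : Fin N → ℝ => ∏ i, f (σ i) (x i) * g (τ i) (x i))
        = fun x : Fin N → ℝ =>
          ∏ i, (Set.Icc a b).indicator (fun t => f (σ i) t * g (τ i) t) (x i) :=
      funext (hind σ τ)
    rw [this, MeasureTheory.integral_fintype_prod_volume_eq_prod (ι := Fin N)
      (fun i => (Set.Icc a b).indicator (fun t => f (σ i) t * g (τ i) t))]
    refine Finset.prod_congr rfl fun i _ => ?_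
    rw [integral_indicator measurableSet_Icc]
    rfl
  calc
    (∫ x in S,
        Matrix.det (Matrix.of fun i j : Fin N => f i (x j)) *
          Matrix.det (Matrix.of fun i j : Fin N => g i (x j)))
      = ∫ x in S, ∑ σ : Equiv.Perm (Fin N), ∑ τ : Equiv.Perm (Fin N),
          ((Equiv.Perm.sign σ : ℤ) : ℝ) * ((Equiv.Perm.sign τ : ℤ) : ℝ) *
            ∏ i, f (σ i) (x i) * g (τ i) (x i) := by
        exact integral_congr_ae (Filter.Eventually.of_forall fun x => hdet x)
    _ = ∑ σ : Equiv.Perm (Fin N), ∑ τ : Equiv.Perm (Fin N),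
          ((Equiv.Perm.sign σ : ℤ) : ℝ) * ((Equiv.Perm.sign τ : ℤ) : ℝ) *
            ∏ i, C (σ i) (τ i) := by
        rw [integral_finset_sum]
        · refine Finset.sum_congr rfl fun σ _ => ?_
          rw [integral_finset_sum]
          · refine Finset.sum_congr rfl fun τ _ => ?_
            rw [integral_const_mul, hprod σ τ]
          · exact fun τ _ => ((hintg σ τ).const_mul _)
        · exact fun σ _ => integrable_finset_sum _ fun τ _ => ((hintg σ τ).const_mul _)
    _ = ∑ _σ : Equiv.Perm (Fin N), Matrix.det C := by
        refine Finset.sum_congr rfl fun σ _ => ?_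
        rw [← Fintype.sum_equiv (Equiv.mulRight σ)
          (fun ρ => ((Equiv.Perm.sign σ : ℤ) : ℝ) * ((Equiv.Perm.sign (ρ * σ) : ℤ) : ℝ) *
            ∏ i, C (σ i) ((ρ * σ) i))
          (fun τ => ((Equiv.Perm.sign σ : ℤ) : ℝ) * ((Equiv.Perm.sign τ : ℤ) : ℝ) *
            ∏ i, C (σ i) (τ i)) (fun ρ => rfl)]
        have hterm : ∀ ρ : Equiv.Perm (Fin N),
            ((Equiv.Perm.sign σ : ℤ) : ℝ) * ((Equiv.Perm.sign (ρ * σ) : ℤ) : ℝ) *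
              ∏ i, C (σ i) ((ρ * σ) i)
            = ((Equiv.Perm.sign ρ : ℤ) : ℝ) * ∏ i, Cᵀ (ρ i) i := by
          intro ρ
          have h1 : ((Equiv.Perm.sign σ : ℤ) : ℝ) * ((Equiv.Perm.sign (ρ * σ) : ℤ) : ℝ)
              = ((Equiv.Perm.sign ρ : ℤ) : ℝ) := by
            rw [_root_.map_mul]
            push_cast
            rcases Int.units_eq_one_or (Equiv.Perm.sign σ) with h | h <;>
              rw [h] <;> push_cast <;> ring
          have h2 : (∏ i, C (σ i) ((ρ * σ) i)) = ∏ i, Cᵀ (ρ i) i :=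
            calc (∏ i, C (σ i) ((ρ * σ) i)) = ∏ i, C (σ i) (ρ (σ i)) := rfl
            _ = ∏ i, C i (ρ i) := Equiv.prod_comp σ (fun k => C k (ρ k))
            _ = ∏ i, Cᵀ (ρ i) i := rfl
          rw [h1, h2]
        calc (∑ ρ : Equiv.Perm (Fin N),
              ((Equiv.Perm.sign σ : ℤ) : ℝ) * ((Equiv.Perm.sign (ρ * σ) : ℤ) : ℝ) *
                ∏ i, C (σ i) ((ρ * σ) i))
            = ∑ ρ : Equiv.Perm (Fin N), ((Equiv.Perm.sign ρ : ℤ) : ℝ) * ∏ i, Cᵀ (ρ i) i :=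
              Finset.sum_congr rfl fun ρ _ => hterm ρ
          _ = Matrix.det Cᵀ := (Matrix.det_apply' Cᵀ).symm
          _ = Matrix.det C := Matrix.det_transpose C
    _ = (N.factorial : ℝ) * Matrix.det C := by
        rw [Finset.sum_const, Finset.card_univ, Fintype.card_perm, Fintype.card_fin,
          nsmul_eq_mul]
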